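/- arXiv:1807.06805 — 3 statements merged into one kernel-verified Lean document; each statement's English description precedes it below -/
import Mathlib

section
/- For k ∈ ℕ, define h_k : ℝ → ℝ by h_k(y) = e^{-y} y^k / k!. Then for every y ≥ 0: if k ≥ 3, |h_k'''(y)| ≤ 8 (max(y,1))^k / (k−3)!, and if k ≤ 2, |h_k'''(y)| ≤ 8 (max(y,1))^k. -/
lemma expMul_hasDerivAt (q q' : ℝ → ℝ) (hq : ∀ x, HasDerivAt q (q' x) x) (y : ℝ) :
    HasDerivAt (fun x => Real.exp (-x) * q x) (Real.exp (-y) * (q' y - q y)) y := by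
  have h1 : HasDerivAt (fun x : ℝ => Real.exp (-x)) (-Real.exp (-y)) y := by
    simpa using (hasDerivAt_neg y).exp
  have h2 := h1.mul (hq y)
  refine h2.congr_deriv ?_
  ring

lemma iter3 (q0 q0' q1' q2' : ℝ → ℝ)
    (h0 : ∀ x, HasDerivAt q0 (q0' x) x)
    (h1 : ∀ x, HasDerivAt (fun t => q0' t - q0 t) (q1' x) x)
    (h2 : ∀ x, HasDerivAt (fun t => q1' t - (q0' t - q0 t)) (q2' x) x)
    (y : ℝ) :
    iteratedDeriv 3 (fun x => Real.exp (-x) * q0 x) y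
      = Real.exp (-y) * (q2' y - (q1' y - (q0' y - q0 y))) := by
  have d1 : deriv (fun x => Real.exp (-x) * q0 x)
      = fun x => Real.exp (-x) * (q0' x - q0 x) :=
    funext fun x => (expMul_hasDerivAt q0 q0' h0 x).deriv
  have d2 : deriv (fun x => Real.exp (-x) * (q0' x - q0 x))
      = fun x => Real.exp (-x) * (q1' x - (q0' x - q0 x)) :=
    funext fun x => (expMul_hasDerivAt _ q1' h1 x).deriv
  have d3 : deriv (fun x => Real.exp (-x) * (q1' x - (q0' x - q0 x)))
      = fun x => Real.exp (-x) * (q2' x - (q1' x - (q0' x - q0 x))) :=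
    funext fun x => (expMul_hasDerivAt _ q2' h2 x).deriv
  rw [show (3:ℕ) = 0+1+1+1 from rfl, iteratedDeriv_succ, iteratedDeriv_succ,
    iteratedDeriv_succ, iteratedDeriv_zero, d1, d2, d3]

lemma hasDerivAt_P (m : ℕ) (x : ℝ) :
    HasDerivAt (fun t : ℝ => t ^ (m+1) / ((m+1).factorial : ℝ))
      (x ^ m / (m.factorial : ℝ)) x := by
  have h := (hasDerivAt_pow (m+1) x).div_const ((m+1).factorial : ℝ)
  refine h.congr_deriv ?_
  have h1 : ((m:ℝ)+1) ≠ 0 := by positivity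
  have h2 : (m.factorial : ℝ) ≠ 0 := Nat.cast_ne_zero.mpr m.factorial_ne_zero
  rw [Nat.factorial_succ]
  simp only [Nat.add_sub_cancel]
  push_cast
  field_simp

/-- For `k ∈ ℕ`, let `h_k(y) = e^{-y} y^k / k!`. For every `y ≥ 0`:
if `k ≥ 3` then `|h_k'''(y)| ≤ 8 (max y 1)^k / (k-3)!`, and if `k ≤ 2` then
`|h_k'''(y)| ≤ 8 (max y 1)^k`. -/
theorem stmt_7 (k : ℕ) (h : ℝ → ℝ)
    (hdef : ∀ y : ℝ, h y = Real.exp (-y) * y ^ k / (Nat.factorial k : ℝ))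
    (y : ℝ) (hy : 0 ≤ y) :
    (3 ≤ k → |iteratedDeriv 3 h y| ≤ 8 * (max y 1) ^ k / (Nat.factorial (k - 3) : ℝ)) ∧
    (k ≤ 2 → |iteratedDeriv 3 h y| ≤ 8 * (max y 1) ^ k) := by
  set M := max y 1 with hM
  have hM1 : (1:ℝ) ≤ M := le_max_right y 1
  have hyM : y ≤ M := le_max_left y 1
  have hM0 : (0:ℝ) ≤ M := by linarith
  have key : ∀ A : ℝ, |Real.exp (-y) * A| ≤ |A| := by
    intro A
    rw [abs_mul, abs_of_nonneg (Real.exp_pos _).le]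
    have : Real.exp (-y) ≤ 1 := by
      calc Real.exp (-y) ≤ Real.exp 0 := Real.exp_le_exp.mpr (by linarith)
        _ = 1 := Real.exp_zero
    exact mul_le_of_le_one_left (abs_nonneg A) this
  match k with
  | 0 =>
    refine ⟨fun hk => by omega, fun _ => ?_⟩
    have hh : h = fun x => Real.exp (-x) * (fun _ : ℝ => (1:ℝ)) x := by
      funext x; rw [hdef]; norm_num
    rw [hh, iter3 (fun _ => (1:ℝ)) (fun _ => 0) (fun _ => 0) (fun _ => 0)
      (fun x => hasDerivAt_const x 1) (fun x => hasDerivAt_const x (0-1))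
      (fun x => hasDerivAt_const x (0-(0-1))) y]
    have : |Real.exp (-y) * (0 - (0 - (0 - 1)))| ≤ |(0:ℝ) - (0 - (0 - 1))| := key _
    calc |Real.exp (-y) * (0 - (0 - (0 - 1)))| ≤ |(0:ℝ) - (0 - (0 - 1))| := key _
      _ = 1 := by norm_num
      _ ≤ 8 * M ^ 0 := by norm_num
  | 1 =>
    refine ⟨fun hk => by omega, fun _ => ?_⟩
    have hh : h = fun x => Real.exp (-x) * (fun t : ℝ => t) x := by
      funext x; rw [hdef]; norm_num [Nat.factorial]
    rw [hh, iter3 (fun t => t) (fun _ => 1) (fun _ => 0-1) (fun _ => 0-(0-1))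
      (fun x => hasDerivAt_id x)
      (fun x => (hasDerivAt_const x 1).sub (hasDerivAt_id x))
      (fun x => (hasDerivAt_const x (0-1)).sub ((hasDerivAt_const x 1).sub (hasDerivAt_id x))) y]
    calc |Real.exp (-y) * (0 - (0 - 1) - (0 - 1 - (1 - y)))|
        ≤ |0 - (0 - 1) - (0 - 1 - (1 - y))| := key _
      _ ≤ 8 * M ^ 1 := by
          rw [abs_le]; constructor <;> [skip; skip] <;> nlinarith
  | 2 =>
    refine ⟨fun hk => by omega, fun _ => ?_⟩
    have d0 : ∀ x : ℝ, HasDerivAt (fun t : ℝ => t^2/2) x x := by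
      intro x
      have := (hasDerivAt_pow 2 x).div_const 2
      refine this.congr_deriv ?_
      push_cast
      ring
    have hh : h = fun x => Real.exp (-x) * (fun t : ℝ => t^2/2) x := by
      funext x; rw [hdef]; norm_num [Nat.factorial]; ring
    rw [hh, iter3 (fun t => t^2/2) (fun t => t) (fun t => 1 - t)
      (fun t => 0 - 1 - (1 - t)) d0
      (fun x => (hasDerivAt_id x).sub (d0 x))
      (fun x => ((hasDerivAt_const x 1).sub (hasDerivAt_id x)).sub
        ((hasDerivAt_id x).sub (d0 x))) y]
    calc |Real.exp (-y) * (0 - 1 - (1 - y) - (1 - y - (y - y^2/2)))|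
        ≤ |0 - 1 - (1 - y) - (1 - y - (y - y^2/2))| := key _
      _ ≤ 8 * M ^ 2 := by
          rw [abs_le]; constructor <;> nlinarith
  | (n+3) =>
    refine ⟨fun _ => ?_, fun hk => by omega⟩
    have hh : h = fun x => Real.exp (-x) * (fun t : ℝ => t^(n+3)/((n+3).factorial : ℝ)) x := by
      funext x; rw [hdef]; ring
    rw [hh, iter3 (fun t => t^(n+3)/((n+3).factorial : ℝ))
      (fun t => t^(n+2)/((n+2).factorial : ℝ))
      (fun t => t^(n+1)/((n+1).factorial : ℝ) - t^(n+2)/((n+2).factorial : ℝ))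
      (fun t => (t^n/(n.factorial : ℝ) - t^(n+1)/((n+1).factorial : ℝ))
        - (t^(n+1)/((n+1).factorial : ℝ) - t^(n+2)/((n+2).factorial : ℝ)))
      (fun x => hasDerivAt_P (n+2) x)
      (fun x => (hasDerivAt_P (n+1) x).sub (hasDerivAt_P (n+2) x))
      (fun x => ((hasDerivAt_P n x).sub (hasDerivAt_P (n+1) x)).sub
        ((hasDerivAt_P (n+1) x).sub (hasDerivAt_P (n+2) x))) y]
    have hfac : ∀ i : ℕ, (0:ℝ) < (n+i).factorial := by
      intro i; exact_mod_cast Nat.factorial_pos (n+i)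
    have hbd : ∀ i : ℕ, i ≤ 3 → y^(n+i)/((n+i).factorial : ℝ) ≤ M^(n+3)/(n.factorial : ℝ) := by
      intro i hi
      apply div_le_div₀ (by positivity) _ (by exact_mod_cast Nat.factorial_pos n)
        (by exact_mod_cast Nat.factorial_le (by omega : n ≤ n + i))
      calc y^(n+i) ≤ M^(n+i) := pow_le_pow_left₀ hy hyM _
        _ ≤ M^(n+3) := pow_le_pow_right₀ hM1 (by omega)
    have hpos : ∀ i : ℕ, (0:ℝ) ≤ y^(n+i)/((n+i).factorial : ℝ) := by
      intro i; positivity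
    have a0 := hbd 0 (by omega); have a1 := hbd 1 (by omega)
    have a2 := hbd 2 (by omega); have a3 := hbd 3 (by omega)
    have p0 := hpos 0; have p1 := hpos 1; have p2 := hpos 2; have p3 := hpos 3
    simp only [Nat.add_zero] at a0 p0
    have hkn : (n+3) - 3 = n := by omega
    rw [hkn]
    have hB : (0:ℝ) ≤ M^(n+3)/(n.factorial : ℝ) := by positivity
    calc |Real.exp (-y) * (y^n/(n.factorial : ℝ) - y^(n+1)/((n+1).factorial : ℝ)
          - (y^(n+1)/((n+1).factorial : ℝ) - y^(n+2)/((n+2).factorial : ℝ))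
          - (y^(n+1)/((n+1).factorial : ℝ) - y^(n+2)/((n+2).factorial : ℝ)
            - (y^(n+2)/((n+2).factorial : ℝ) - y^(n+3)/((n+3).factorial : ℝ))))|
        ≤ |y^n/(n.factorial : ℝ) - y^(n+1)/((n+1).factorial : ℝ)
          - (y^(n+1)/((n+1).factorial : ℝ) - y^(n+2)/((n+2).factorial : ℝ))
          - (y^(n+1)/((n+1).factorial : ℝ) - y^(n+2)/((n+2).factorial : ℝ)
            - (y^(n+2)/((n+2).factorial : ℝ) - y^(n+3)/((n+3).factorial : ℝ)))| := key _
      _ ≤ 8 * (M^(n+3)/(n.factorial : ℝ)) := by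
          rw [abs_le]; constructor <;> linarith
      _ = 8 * M^(n+3)/(n.factorial : ℝ) := by ring
end

section
/- Let r : [0,∞) → ℝ satisfy ∫₀^∞ (1 + v)|r(v)| dv < ∞, let t > 0, and let 0 ≤ u₁ ≤ u₂ ≤ t. Then ε · ∫_{(t−u₂)/ε}^{t/ε} ∫_{(t−u₁)/ε}^{t/ε} r(|s₁ − s₂|) ds₁ ds₂ → 2 u₁ ∫₀^∞ r(v) dv as ε → 0⁺. -/
open MeasureTheory Filter

private lemma vol_inter_aux (a b c d : ℝ) :
    volume (Set.Ioc a b ∩ Set.Ico c d) = ENNReal.ofReal (min b d - max a c) := by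
  apply le_antisymm
  · calc volume (Set.Ioc a b ∩ Set.Ico c d)
        ≤ volume (Set.Icc (max a c) (min b d)) := by
          apply measure_mono
          rintro x ⟨⟨h1, h2⟩, h3, h4⟩
          exact ⟨max_le h1.le h3, le_min h2 h4.le⟩
      _ = ENNReal.ofReal (min b d - max a c) := Real.volume_Icc
  · rw [← Real.volume_Ioo]
    apply measure_mono
    rintro x ⟨h1, h2⟩
    rw [max_lt_iff] at h1
    rw [lt_min_iff] at h2
    exact ⟨⟨h1.1, h2.1.le⟩, h1.2.le, h2.2⟩

private lemma toReal_ofReal_max (x : ℝ) : (ENNReal.ofReal x).toReal = max x 0 := by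
  rcases le_total 0 x with h | h
  · rw [ENNReal.toReal_ofReal h, max_eq_left h]
  · rw [ENNReal.ofReal_of_nonpos h, max_eq_right h, ENNReal.toReal_zero]

/-- If `∫₀^∞ (1+v)|r(v)| dv < ∞`, `t > 0`, and `0 ≤ u₁ ≤ u₂ ≤ t`, then
`ε ∫_{(t-u₂)/ε}^{t/ε} ∫_{(t-u₁)/ε}^{t/ε} r(|s₁-s₂|) ds₁ ds₂ → 2 u₁ ∫₀^∞ r(v) dv` as `ε → 0⁺`. -/
theorem stmt_11 (r : ℝ → ℝ) (hrmeas : Measurable r)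
    (hr : IntegrableOn (fun v => (1 + v) * |r v|) (Set.Ici 0))
    (t : ℝ) (ht : 0 < t) (u₁ u₂ : ℝ) (hu₁ : 0 ≤ u₁) (hu₁₂ : u₁ ≤ u₂) (hu₂ : u₂ ≤ t) :
    Tendsto
      (fun ε : ℝ =>
        ε * ∫ s₁ in ((t - u₂) / ε)..(t / ε), ∫ s₂ in ((t - u₁) / ε)..(t / ε), r |s₁ - s₂|)
      (nhdsWithin 0 (Set.Ioi 0)) (nhds (2 * u₁ * ∫ v in Set.Ioi (0:ℝ), r v)) := by
  set G : ℝ → ℝ := fun v => r |v| with hG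
  have hGmeas : Measurable G := hrmeas.comp (continuous_abs.measurable)
  -- integrability of r on [0, ∞)
  have hrInt : IntegrableOn r (Set.Ici 0) := by
    refine hr.mono' hrmeas.aestronglyMeasurable ?_
    filter_upwards [ae_restrict_mem measurableSet_Ici] with v hv
    have h1 : (1:ℝ) ≤ 1 + v := by simpa using hv
    calc ‖r v‖ = 1 * |r v| := by rw [one_mul]; rfl
      _ ≤ (1 + v) * |r v| := mul_le_mul_of_nonneg_right h1 (abs_nonneg _)
  -- integrability of G on ℝ
  have hGint : Integrable G := by
    rw [← integrableOn_univ, ← Set.Iio_union_Ici (a := (0:ℝ)), integrableOn_union]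
    constructor
    · rw [← (Measure.measurePreserving_neg (volume : Measure ℝ)).integrableOn_comp_preimage
        (Homeomorph.neg ℝ).measurableEmbedding]
      have hpre : ((Neg.neg : ℝ → ℝ) ⁻¹' Set.Iio 0) = Set.Ioi 0 := by
        ext x; simp
      simp only [Function.comp_def]
      rw [hpre]
      refine (hrInt.mono_set Set.Ioi_subset_Ici_self).congr_fun ?_ measurableSet_Ioi
      intro x hx
      simp [hG, abs_of_nonpos (neg_nonpos.mpr (le_of_lt (Set.mem_Ioi.mp hx)))]
    · refine hrInt.congr_fun ?_ measurableSet_Ici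
      intro x hx
      simp [hG, abs_of_nonneg (Set.mem_Ici.mp hx)]
  -- the limiting weight function
  set φ : ℝ → ℝ → ℝ := fun ε v =>
    min t (t + ε * v) - max (t - u₂) (t - u₁ + ε * v) with hφ
  have hφ_le : ∀ ε v, max (φ ε v) 0 ≤ u₁ := by
    intro ε v
    apply max_le _ hu₁
    have h1 : min t (t + ε * v) ≤ t + ε * v := min_le_right _ _
    have h2 : t - u₁ + ε * v ≤ max (t - u₂) (t - u₁ + ε * v) := le_max_right _ _
    simp only [hφ]
    linarith
  -- pointwise limit
  have hφ_tendsto : ∀ v : ℝ, Tendsto (fun ε : ℝ => max (φ ε v) 0 * G v)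
      (nhdsWithin 0 (Set.Ioi 0)) (nhds (u₁ * G v)) := by
    intro v
    have hcont : Continuous fun ε : ℝ => max (φ ε v) 0 * G v := by
      apply Continuous.mul _ continuous_const
      apply Continuous.max _ continuous_const
      apply Continuous.sub
      · exact continuous_const.min (continuous_const.add (continuous_id.mul continuous_const))
      · exact continuous_const.max (continuous_const.add (continuous_id.mul continuous_const))
    have h0 : max (φ 0 v) 0 = u₁ := by
      have : φ 0 v = u₁ := by
        simp only [hφ, zero_mul, add_zero, min_self]
        rw [max_eq_right (by linarith : t - u₂ ≤ t - u₁)]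
        ring
      rw [this, max_eq_left hu₁]
    have := hcont.tendsto 0
    rw [h0] at this
    exact tendsto_nhdsWithin_of_tendsto_nhds this
  -- dominated convergence
  have hDCT : Tendsto (fun ε : ℝ => ∫ v, max (φ ε v) 0 * G v)
      (nhdsWithin 0 (Set.Ioi 0)) (nhds (∫ v, u₁ * G v)) := by
    apply tendsto_integral_filter_of_dominated_convergence (fun v => u₁ * |G v|)
    · filter_upwards with ε
      apply Measurable.aestronglyMeasurable
      apply Measurable.mul _ hGmeas
      apply Measurable.max _ measurable_const
      apply Measurable.sub
      · exact (continuous_const.min (continuous_const.add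
          (continuous_const.mul continuous_id))).measurable
      · exact (continuous_const.max (continuous_const.add
          (continuous_const.mul continuous_id))).measurable
    · filter_upwards with ε
      apply ae_of_all
      intro v
      rw [norm_mul, Real.norm_eq_abs, Real.norm_eq_abs,
        abs_of_nonneg (le_max_right (φ ε v) 0)]
      exact mul_le_mul_of_nonneg_right (hφ_le ε v) (abs_nonneg _)
    · exact hGint.abs.const_mul u₁
    · exact ae_of_all _ hφ_tendsto
  -- identify the limit value
  have hval : (∫ v, u₁ * G v) = 2 * u₁ * ∫ v in Set.Ioi (0:ℝ), r v := by
    rw [integral_const_mul]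
    have h2 : (∫ v, G v) = 2 * ∫ v in Set.Ioi (0:ℝ), r v := _root_.integral_comp_abs (f := r)
    rw [h2]
    ring
  rw [hval] at hDCT
  -- main computation : eventual equality on Ioi 0
  apply hDCT.congr'
  filter_upwards [self_mem_nhdsWithin] with ε (hε : 0 < ε)
  set a₁ : ℝ := (t - u₁) / ε with ha₁
  set a₂ : ℝ := (t - u₂) / ε with ha₂
  set b : ℝ := t / ε with hb
  have hεne : ε ≠ 0 := ne_of_gt hε
  have ha₁b : a₁ ≤ b := by rw [ha₁, hb]; gcongr; linarith
  have ha₂b : a₂ ≤ b := by rw [ha₂, hb]; gcongr; linarith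
  -- inner integral
  have hinner : ∀ s₁ : ℝ, (∫ s₂ in a₁..b, r |s₁ - s₂|)
      = ∫ v, (Set.Ico (v + a₁) (v + b)).indicator (fun _ => G v) s₁ := by
    intro s₁
    calc (∫ s₂ in a₁..b, r |s₁ - s₂|)
        = ∫ x in (s₁ - b)..(s₁ - a₁), G x :=
          intervalIntegral.integral_comp_sub_left G s₁
      _ = ∫ v in Set.Ioc (s₁ - b) (s₁ - a₁), G v :=
          intervalIntegral.integral_of_le (by linarith)
      _ = ∫ v, (Set.Ioc (s₁ - b) (s₁ - a₁)).indicator G v :=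
          (integral_indicator measurableSet_Ioc).symm
      _ = ∫ v, (Set.Ico (v + a₁) (v + b)).indicator (fun _ => G v) s₁ := by
          congr 1
          funext v
          by_cases hv : v ∈ Set.Ioc (s₁ - b) (s₁ - a₁)
          · rw [Set.indicator_of_mem hv, Set.indicator_of_mem]
            rw [Set.mem_Ioc] at hv
            exact ⟨by linarith [hv.2], by linarith [hv.1]⟩
          · rw [Set.indicator_of_notMem hv, Set.indicator_of_notMem]
            intro hmem
            rw [Set.mem_Ico] at hmem
            exact hv ⟨by linarith [hmem.2], by linarith [hmem.1]⟩
  -- Fubini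
  haveI : IsFiniteMeasure (volume.restrict (Set.Ioc a₂ b)) :=
    ⟨by rw [Measure.restrict_apply_univ]; exact measure_Ioc_lt_top⟩
  have hfub : Integrable
      (Function.uncurry fun s₁ v => (Set.Ico (v + a₁) (v + b)).indicator (fun _ => G v) s₁)
      ((volume.restrict (Set.Ioc a₂ b)).prod volume) := by
    have hset : MeasurableSet {p : ℝ × ℝ | p.2 + a₁ ≤ p.1 ∧ p.1 < p.2 + b} := by
      apply MeasurableSet.inter
      · exact measurableSet_le (measurable_snd.add_const a₁) measurable_fst
      · exact measurableSet_lt measurable_fst (measurable_snd.add_const b)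
    have heq : (Function.uncurry fun s₁ v =>
        (Set.Ico (v + a₁) (v + b)).indicator (fun _ => G v) s₁)
        = Set.indicator {p : ℝ × ℝ | p.2 + a₁ ≤ p.1 ∧ p.1 < p.2 + b} (fun p => G p.2) := by
      funext p
      simp only [Function.uncurry, Set.indicator_apply, Set.mem_Ico, Set.mem_setOf_eq]
    have hdom : Integrable (fun p : ℝ × ℝ => (1:ℝ) * |G p.2|)
        ((volume.restrict (Set.Ioc a₂ b)).prod volume) :=
      (integrable_const (1:ℝ)).mul_prod hGint.abs
    refine Integrable.mono' (g := fun p => (1:ℝ) * |G p.2|) hdom ?_ ?_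
    · rw [heq]
      exact ((hGmeas.comp measurable_snd).indicator hset).aestronglyMeasurable
    · apply ae_of_all
      rintro ⟨s₁, v⟩
      simp only [Function.uncurry_apply_pair, one_mul]
      by_cases h : s₁ ∈ Set.Ico (v + a₁) (v + b)
      · rw [Set.indicator_of_mem h]
        exact le_of_eq (Real.norm_eq_abs _)
      · rw [Set.indicator_of_notMem h]
        simp [abs_nonneg]
  -- scaling of the volume
  have hεa₁ : ε * a₁ = t - u₁ := by rw [ha₁, mul_comm]; exact div_mul_cancel₀ _ hεne
  have hεa₂ : ε * a₂ = t - u₂ := by rw [ha₂, mul_comm]; exact div_mul_cancel₀ _ hεne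
  have hεb : ε * b = t := by rw [hb, mul_comm]; exact div_mul_cancel₀ _ hεne
  have hvol : ∀ v : ℝ,
      ε * (volume (Set.Ioc a₂ b ∩ Set.Ico (v + a₁) (v + b))).toReal = max (φ ε v) 0 := by
    intro v
    rw [vol_inter_aux, toReal_ofReal_max]
    rw [mul_max_of_nonneg _ _ hε.le, mul_zero, mul_sub,
      mul_min_of_nonneg _ _ hε.le, mul_max_of_nonneg _ _ hε.le,
      mul_add, mul_add, hεa₁, hεa₂, hεb]
    simp only [hφ]
    congr 2
    · ring_nf
    · ring_nf
  -- put everything together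
  symm
  calc ε * ∫ s₁ in a₂..b, ∫ s₂ in a₁..b, r |s₁ - s₂|
      = ε * ∫ s₁ in Set.Ioc a₂ b,
          ∫ v, (Set.Ico (v + a₁) (v + b)).indicator (fun _ => G v) s₁ := by
        rw [intervalIntegral.integral_of_le ha₂b]
        congr 1
        exact setIntegral_congr_fun measurableSet_Ioc (fun s₁ _ => hinner s₁)
    _ = ε * ∫ v, ∫ s₁ in Set.Ioc a₂ b,
          (Set.Ico (v + a₁) (v + b)).indicator (fun _ => G v) s₁ := by
        rw [integral_integral_swap hfub]
    _ = ε * ∫ v, G v * (volume (Set.Ioc a₂ b ∩ Set.Ico (v + a₁) (v + b))).toReal := by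
        congr 1
        congr 1
        funext v
        rw [setIntegral_indicator measurableSet_Ico, setIntegral_const, smul_eq_mul, mul_comm, measureReal_def]
    _ = ∫ v, max (φ ε v) 0 * G v := by
        rw [← integral_const_mul]
        congr 1
        funext v
        rw [← hvol v]
        ring
end

section
/- Let λ : ℝ → [0,∞) be bounded, measurable, and periodic with period 1 (λ(s+1) = λ(s) for all s ≥ 0), and set λ* = ∫₀^1 λ(r) dr; assume λ* > 0. For k ∈ ℕ, define h_k : ℝ → ℝ by h_k(y) = e^{-y} y^k / k!. Fix t > 0 and k ∈ ℕ. Then, as ε → 0⁺, h_k( ∫₀^t λ(s/ε) ds ) = h_k(λ* t) · ( 1 + ε (k/(λ* t) − 1) ∫_{⌊t/ε⌋}^{t/ε} (λ(s) − λ*) ds ) + o(ε), where ⌊x⌋ denotes the greatest integer less than or equal to x. Equivalently, for a Poisson process N_ε with deterministic intensity λ_ε(s) = λ(s/ε), P(N_ε(t) = k) = P(N_0(t) = k)( 1 + ε (k/(λ* t) − 1) ∫_{⌊t/ε⌋}^{t/ε} (λ(s) − λ*) ds + o(ε) ), where N_0(t) is Poisson with mean λ* t. -/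
open MeasureTheory Filter Asymptotics

private lemma intInt_of_bounded {f : ℝ → ℝ} (hf : Measurable f) {C : ℝ}
    (hC : ∀ s, |f s| ≤ C) (u v : ℝ) : IntervalIntegrable f volume u v := by
  rw [intervalIntegrable_iff]
  refine Measure.integrableOn_of_bounded (M := C) (measure_Ioc_lt_top).ne
    hf.aestronglyMeasurable (ae_of_all _ fun s => ?_)
  simpa [Real.norm_eq_abs] using hC s

/-- First-order refinement in the deterministic periodic setting: for `λ ≥ 0` bounded,
measurable, `1`-periodic on `[0,∞)` with `λ* = ∫₀^1 λ > 0`, `t > 0` and `k ∈ ℕ`,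
`h_k(∫₀^t λ(s/ε) ds) = h_k(λ* t) (1 + ε (k/(λ* t) - 1) ∫_{⌊t/ε⌋}^{t/ε} (λ(s)-λ*) ds) + o(ε)`
as `ε → 0⁺`, where `h_k(y) = e^{-y} y^k / k!`. -/
theorem stmt_13 (lam : ℝ → ℝ) (hmeas : Measurable lam) (hnonneg : ∀ s, 0 ≤ lam s)
    (hbdd : ∃ C : ℝ, ∀ s, lam s ≤ C)
    (hper : ∀ s : ℝ, 0 ≤ s → lam (s + 1) = lam s)
    (lamStar : ℝ) (hstar : lamStar = ∫ r in (0:ℝ)..1, lam r) (hpos : 0 < lamStar)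
    (t : ℝ) (ht : 0 < t) (k : ℕ) (h : ℝ → ℝ)
    (hdef : ∀ y : ℝ, h y = Real.exp (-y) * y ^ k / (Nat.factorial k : ℝ)) :
    (fun ε : ℝ =>
        h (∫ s in (0:ℝ)..t, lam (s / ε)) -
          h (lamStar * t) *
            (1 + ε * ((k : ℝ) / (lamStar * t) - 1) *
              ∫ s in ((⌊t / ε⌋ : ℝ))..(t / ε), (lam s - lamStar)))
      =o[nhdsWithin 0 (Set.Ioi 0)] (fun ε : ℝ => ε) := by
  obtain ⟨C, hC⟩ := hbdd
  have hC0 : 0 ≤ C := le_trans (hnonneg 0) (hC 0)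
  have habs : ∀ s, |lam s| ≤ C := fun s => abs_le.mpr ⟨by linarith [hnonneg s], hC s⟩
  set a : ℝ := lamStar * t with ha
  have hapos : 0 < a := mul_pos hpos ht
  set B : ℝ := C + lamStar with hB
  have hBpos : 0 < B := by positivity
  set R : ℝ → ℝ := fun ε => ∫ s in ((⌊t / ε⌋ : ℝ))..(t / ε), (lam s - lamStar) with hRdef
  set g : ℝ → ℝ := fun s => lam (Int.fract s) with hg
  have hgmeas : Measurable g := hmeas.comp measurable_fract
  have hgabs : ∀ s, |g s| ≤ C := fun s => habs _
  have hgint : ∀ u v : ℝ, IntervalIntegrable g volume u v := intInt_of_bounded hgmeas hgabs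
  have hlamint : ∀ u v : ℝ, IntervalIntegrable lam volume u v := intInt_of_bounded hmeas habs
  have hshift : ∀ (n : ℕ) (x : ℝ), 0 ≤ x → lam (x + n) = lam x := by
    intro n
    induction n with
    | zero => simp
    | succ n ih =>
      intro x hx
      have e : (x + ((n+1 : ℕ) : ℝ)) = (x + n) + 1 := by push_cast; ring
      rw [e, hper _ (by positivity), ih x hx]
  have hgeq : ∀ s : ℝ, 0 ≤ s → g s = lam s := by
    intro s hs
    have h1 : (0:ℤ) ≤ ⌊s⌋ := Int.floor_nonneg.mpr hs
    have e : s = Int.fract s + (⌊s⌋.toNat : ℕ) := by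
      have : ((⌊s⌋.toNat : ℕ) : ℝ) = ((⌊s⌋ : ℤ) : ℝ) := by
        exact_mod_cast congrArg (fun z : ℤ => (z : ℝ)) (Int.toNat_of_nonneg h1)
      rw [this]
      exact (Int.fract_add_floor s).symm
    calc g s = lam (Int.fract s) := rfl
      _ = lam (Int.fract s + (⌊s⌋.toNat : ℕ)) := (hshift _ _ (Int.fract_nonneg s)).symm
      _ = lam s := by rw [← e]
  have hgper : Function.Periodic g 1 := by
    intro s
    simp only [hg]
    rw [Int.fract_add_one]
  -- lamStar as integral of g
  have hstar' : lamStar = ∫ r in (0:ℝ)..1, g r := by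
    rw [hstar]
    refine intervalIntegral.integral_congr fun x hx => ?_
    rw [Set.uIcc_of_le (by norm_num : (0:ℝ) ≤ 1)] at hx
    exact (hgeq x hx.1).symm
  -- the main integral identity
  have hM : ∀ ε : ℝ, 0 < ε → (∫ s in (0:ℝ)..t, lam (s / ε)) = a + ε * R ε := by
    intro ε hε
    have hε' : ε ≠ 0 := ne_of_gt hε
    set T : ℝ := t / ε with hT
    have hTpos : 0 < T := div_pos ht hε
    set n : ℤ := ⌊T⌋ with hn
    have hn0 : (0:ℝ) ≤ (n:ℝ) := by exact_mod_cast Int.floor_nonneg.mpr hTpos.le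
    have hnT : (n:ℝ) ≤ T := Int.floor_le T
    have h1 : (∫ s in (0:ℝ)..t, lam (s / ε)) = ε * ∫ s in (0:ℝ)..T, lam s := by
      rw [intervalIntegral.integral_comp_div (f := lam) hε', smul_eq_mul, zero_div]
    have h2 : (∫ s in (0:ℝ)..T, lam s) = ∫ s in (0:ℝ)..T, g s := by
      refine intervalIntegral.integral_congr fun x hx => ?_
      rw [Set.uIcc_of_le hTpos.le] at hx
      exact (hgeq x hx.1).symm
    have h3 : (∫ s in (0:ℝ)..T, g s) = (∫ s in (0:ℝ)..(n:ℝ), g s) + ∫ s in ((n:ℝ))..T, g s :=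
      (intervalIntegral.integral_add_adjacent_intervals (hgint 0 n) (hgint n T)).symm
    have h4 : (∫ s in (0:ℝ)..(n:ℝ), g s) = (n:ℝ) * lamStar := by
      have := hgper.intervalIntegral_add_zsmul_eq n 0 hgint
      simp only [zero_add, zsmul_eq_mul, mul_one, smul_eq_mul] at this
      rw [this, ← hstar']
    have h6 : (∫ s in ((n:ℝ))..T, g s) = ∫ s in ((n:ℝ))..T, lam s := by
      refine intervalIntegral.integral_congr fun x hx => ?_
      rw [Set.uIcc_of_le hnT] at hx
      exact hgeq x (le_trans hn0 hx.1)
    have h7 : R ε = (∫ s in ((n:ℝ))..T, lam s) - lamStar * (T - n) := by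
      have e : R ε = ∫ s in ((⌊T⌋:ℝ))..T, (lam s - lamStar) := rfl
      rw [e, ← hn]
      rw [intervalIntegral.integral_sub (hlamint _ _) intervalIntegrable_const,
        intervalIntegral.integral_const, smul_eq_mul]
      ring
    have hεT : ε * T = t := by rw [hT]; field_simp
    rw [h1, h2, h3, h4, h6]
    rw [h7]
    ring_nf
    linear_combination lamStar * hεT
  -- bound on R
  have hRb : ∀ ε : ℝ, 0 < ε → |R ε| ≤ B := by
    intro ε hε
    set T : ℝ := t / ε with hT
    have hTpos : 0 < T := div_pos ht hε
    have hb : ‖R ε‖ ≤ B * |T - (⌊T⌋:ℝ)| := by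
      refine intervalIntegral.norm_integral_le_of_norm_le_const fun x hx => ?_
      have := habs x
      rw [Real.norm_eq_abs]
      have : |lam x - lamStar| ≤ |lam x| + |lamStar| := abs_sub _ _
      have h2 : |lamStar| = lamStar := abs_of_pos hpos
      calc |lam x - lamStar| ≤ |lam x| + |lamStar| := abs_sub _ _
        _ ≤ C + lamStar := by rw [h2]; linarith [habs x]
    have hfr : |T - (⌊T⌋:ℝ)| ≤ 1 := by
      have h1 : T - (⌊T⌋:ℝ) = Int.fract T := rfl
      rw [h1, abs_of_nonneg (Int.fract_nonneg T)]
      exact (Int.fract_lt_one T).le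
    calc |R ε| = ‖R ε‖ := (Real.norm_eq_abs _).symm
      _ ≤ B * |T - (⌊T⌋:ℝ)| := hb
      _ ≤ B * 1 := by
          exact mul_le_mul_of_nonneg_left hfr hBpos.le
      _ = B := mul_one B
  -- derivative of h at a
  set c : ℝ := h a * ((k:ℝ)/a - 1) with hc
  have key : a ^ k * ((k:ℝ)/a - 1) = (k:ℝ) * a^(k-1) - a^k := by
    have h2 : a ^ k * ((k:ℝ)/a) = (k:ℝ) * a^(k-1) := by
      cases k with
      | zero => simp
      | succ m =>
        rw [pow_succ, Nat.add_sub_cancel]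
        field_simp
    rw [mul_sub, h2, mul_one]
  have hcv : c = (-Real.exp (-a) * a^k + Real.exp (-a) * ((k:ℝ) * a^(k-1)))/(Nat.factorial k:ℝ) := by
    rw [hc, hdef, div_mul_eq_mul_div, mul_assoc, key]
    ring
  have hd : HasDerivAt (fun y => Real.exp (-y) * y ^ k)
      (-Real.exp (-a) * a ^ k + Real.exp (-a) * ((k:ℝ) * a ^ (k-1))) a := by
    have he : HasDerivAt (fun y : ℝ => Real.exp (-y)) (-Real.exp (-a)) a := by
      simpa [Function.comp_def] using (Real.hasDerivAt_exp (-a)).comp a (hasDerivAt_neg a)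
    simpa [Pi.mul_def] using he.mul (hasDerivAt_pow k a)
  have hderiv : HasDerivAt h c a := by
    rw [hcv]
    exact (hd.div_const (Nat.factorial k : ℝ)).congr_of_eventuallyEq
      (Filter.Eventually.of_forall hdef)
  -- Taylor
  have h1 : (fun y => h y - h a - (y - a) * c) =o[nhds a] (fun y => y - a) := by
    simpa [smul_eq_mul] using hasDerivAt_iff_isLittleO.mp hderiv
  set l : Filter ℝ := nhdsWithin 0 (Set.Ioi 0) with hl
  have hev : ∀ᶠ ε in l, ε ∈ Set.Ioi (0:ℝ) := self_mem_nhdsWithin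
  set u : ℝ → ℝ := fun ε => ε * R ε with hu
  have hu0 : Tendsto u l (nhds 0) := by
    have hbnd : ∀ᶠ ε in l, ‖u ε‖ ≤ B * ε := by
      refine hev.mono fun ε hε => ?_
      rw [Real.norm_eq_abs, hu]
      calc |ε * R ε| = |ε| * |R ε| := abs_mul _ _
        _ ≤ |ε| * B := mul_le_mul_of_nonneg_left (hRb ε hε) (abs_nonneg ε)
        _ = B * ε := by rw [abs_of_pos hε]; ring
    have hg0 : Tendsto (fun ε : ℝ => B * ε) l (nhds 0) := by
      have : Tendsto (fun ε : ℝ => B * ε) (nhds 0) (nhds (B * 0)) :=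
        (tendsto_const_nhds.mul tendsto_id)
      rw [mul_zero] at this
      exact this.mono_left nhdsWithin_le_nhds
    exact squeeze_zero_norm' hbnd hg0
  have hm : Tendsto (fun ε => a + u ε) l (nhds a) := by
    have := tendsto_const_nhds (x := a) (f := l) |>.add hu0
    simpa using this
  have h2 := h1.comp_tendsto hm
  have h3 : (fun ε => h (a + u ε) - h a - u ε * c) =o[l] u := by
    simpa [Function.comp_def, add_sub_cancel_left] using h2
  have h4 : u =O[l] (fun ε : ℝ => ε) := by
    rw [isBigO_iff]
    refine ⟨B, hev.mono fun ε hε => ?_⟩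
    rw [Real.norm_eq_abs, Real.norm_eq_abs, hu]
    calc |ε * R ε| = |ε| * |R ε| := abs_mul _ _
      _ ≤ |ε| * B := mul_le_mul_of_nonneg_left (hRb ε hε) (abs_nonneg ε)
      _ = B * |ε| := by ring
  have h5 := h3.trans_isBigO h4
  refine h5.congr' (hev.mono fun ε hε => ?_) EventuallyEq.rfl
  have hMε := hM ε hε
  simp only [hRdef] at hMε ⊢
  rw [hMε]
  simp only [hu, hRdef]
  ring
end
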